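/- arXiv:2501.16659 — 4 statements merged into one kernel-verified Lean document; each statement's English description precedes it below -/
import Mathlib

section
/- Let V : [0,T] × ℝ → ℝ be defined by V(t,x) = (x + (λ−z)e^{−r(T−t)})²·e^{−(ρ²−2r)(T−t)} + ξ(ρ²−2r)/4·(T²−t²) − (ξ/2)[(ρ²−2r)T − log(σ²/(πξ))](T−t) − λ², with constants ρ, r, λ, z ∈ ℝ, σ > 0, ξ > 0. Then V satisfies the reduced HJB equation V_t(t,x) + V_x(t,x)·r·x − (1/2)·ρ²·V_x(t,x)²/V_xx(t,x) − (ξ/2)·log(2πξ/(σ²·V_xx(t,x))) = 0 for all (t,x) ∈ [0,T] × ℝ, and V_xx(t,x) = 2e^{−(ρ²−2r)(T−t)} > 0. -/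
open Set

/-- One-regime verification: the explicit candidate value function of the exploratory
mean-variance problem satisfies the reduced HJB equation
`V_t + V_x·r·x - (1/2)ρ²V_x²/V_xx - (ξ/2)log(2πξ/(σ²V_xx)) = 0` on `[0,T] × ℝ`,
and `V_xx(t,x) = 2e^{-(ρ²-2r)(T-t)} > 0`. -/
theorem stmt_9 (ρ r lam z σ ξ T : ℝ) (hσ : 0 < σ) (hξ : 0 < ξ) (hT : 0 < T)
    (V : ℝ → ℝ → ℝ)
    (hV : ∀ t x, V t x
      = (x + (lam - z) * Real.exp (-r * (T - t))) ^ 2 * Real.exp (-(ρ ^ 2 - 2 * r) * (T - t))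
        + ξ * (ρ ^ 2 - 2 * r) / 4 * (T ^ 2 - t ^ 2)
        - (ξ / 2) * ((ρ ^ 2 - 2 * r) * T - Real.log (σ ^ 2 / (Real.pi * ξ))) * (T - t)
        - lam ^ 2) :
    ∀ t ∈ Icc (0 : ℝ) T, ∀ x : ℝ,
      (deriv (fun y => deriv (fun x' => V t x') y) x = 2 * Real.exp (-(ρ ^ 2 - 2 * r) * (T - t))
        ∧ 0 < deriv (fun y => deriv (fun x' => V t x') y) x)
      ∧ deriv (fun s => V s x) t
          + deriv (fun x' => V t x') x * r * x
          - (1 / 2) * ρ ^ 2 * (deriv (fun x' => V t x') x) ^ 2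
              / deriv (fun y => deriv (fun x' => V t x') y) x
          - (ξ / 2) * Real.log (2 * Real.pi * ξ
              / (σ ^ 2 * deriv (fun y => deriv (fun x' => V t x') y) x)) = 0 := by
  intro t ht x
  set c : ℝ := ρ ^ 2 - 2 * r with hc
  set E1 : ℝ := Real.exp (-r * (T - t)) with hE1
  set E2 : ℝ := Real.exp (-c * (T - t)) with hE2
  set K : ℝ := c * T - Real.log (σ ^ 2 / (Real.pi * ξ)) with hK
  have hE2pos : 0 < E2 := Real.exp_pos _
  -- first x-derivative
  have hBx : ∀ y : ℝ, HasDerivAt (fun x' => V t x')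
      (2 * (y + (lam - z) * E1) * E2) y := by
    intro y
    have heq : (fun x' => V t x') = fun x' =>
        (x' + (lam - z) * E1) ^ 2 * E2
        + (ξ * c / 4 * (T ^ 2 - t ^ 2) - ξ / 2 * K * (T - t) - lam ^ 2) := by
      funext x'; rw [hV]; ring
    rw [heq]
    have h0 : HasDerivAt (fun x' : ℝ => x' + (lam - z) * E1) 1 y :=
      (hasDerivAt_id y).add_const _
    have h1 : HasDerivAt (fun x' : ℝ => (x' + (lam - z) * E1) ^ 2)
        (2 * (y + (lam - z) * E1)) y := by
      have := h0.pow 2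
      norm_num at this
      exact this
    simpa using (h1.mul_const E2).add_const (ξ * c / 4 * (T ^ 2 - t ^ 2) - ξ / 2 * K * (T - t) - lam ^ 2)
  have hD1 : ∀ y : ℝ, deriv (fun x' => V t x') y = 2 * (y + (lam - z) * E1) * E2 :=
    fun y => (hBx y).deriv
  -- second x-derivative
  have hD2 : deriv (fun y => deriv (fun x' => V t x') y) x = 2 * E2 := by
    have heq : (fun y => deriv (fun x' => V t x') y)
        = fun y => 2 * (y + (lam - z) * E1) * E2 := funext hD1
    rw [heq]
    have h0 : HasDerivAt (fun y : ℝ => y + (lam - z) * E1) 1 x :=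
      (hasDerivAt_id x).add_const _
    have : HasDerivAt (fun y : ℝ => 2 * (y + (lam - z) * E1) * E2) (2 * E2) x := by
      have := (h0.const_mul 2).mul_const E2
      norm_num at this
      exact this
    exact this.deriv
  -- t-derivative
  have hDt : deriv (fun s => V s x) t
      = 2 * (x + (lam - z) * E1) * ((lam - z) * (r * E1)) * E2
        + (x + (lam - z) * E1) ^ 2 * (c * E2)
        + ξ * c / 4 * (-(2 * t)) - ξ / 2 * K * (-1) := by
    have heq : (fun s => V s x) = fun s =>
        (x + (lam - z) * Real.exp (-r * (T - s))) ^ 2 * Real.exp (-c * (T - s))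
        + ξ * c / 4 * (T ^ 2 - s ^ 2) - ξ / 2 * K * (T - s) - lam ^ 2 := by
      funext s; rw [hV]; try ring
    rw [heq]
    have hTs : HasDerivAt (fun s : ℝ => T - s) (-1) t := by
      simpa using (hasDerivAt_id t).const_sub T
    have he1 : HasDerivAt (fun s : ℝ => Real.exp (-r * (T - s))) (r * E1) t := by
      have h := (hTs.const_mul (-r)).exp
      have e : Real.exp (-r * (T - t)) * (-r * -1) = r * E1 := by rw [hE1]; ring
      rw [e] at h; exact h
    have he2 : HasDerivAt (fun s : ℝ => Real.exp (-c * (T - s))) (c * E2) t := by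
      have h := (hTs.const_mul (-c)).exp
      have e : Real.exp (-c * (T - t)) * (-c * -1) = c * E2 := by rw [hE2]; ring
      rw [e] at h; exact h
    have hsq : HasDerivAt (fun s : ℝ => (x + (lam - z) * Real.exp (-r * (T - s))) ^ 2)
        (2 * (x + (lam - z) * E1) * ((lam - z) * (r * E1))) t := by
      have := ((he1.const_mul (lam - z)).const_add x).fun_pow 2
      refine this.congr_deriv ?_
      rw [hE1]
      norm_num
    have hprod := hsq.fun_mul he2
    have hpoly : HasDerivAt (fun s : ℝ => ξ * c / 4 * (T ^ 2 - s ^ 2))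
        (ξ * c / 4 * (-(2 * t))) t := by
      have h2 : HasDerivAt (fun s : ℝ => T ^ 2 - s ^ 2) (-(2 * t)) t := by
        have := (hasDerivAt_pow 2 t).const_sub (T ^ 2)
        norm_num at this
        exact this
      exact h2.const_mul _
    have hlin : HasDerivAt (fun s : ℝ => ξ / 2 * K * (T - s)) (ξ / 2 * K * (-1)) t :=
      hTs.const_mul _
    have := (((hprod.fun_add hpoly).fun_sub hlin).sub_const (lam ^ 2))
    convert this.deriv using 1
    try ring
  refine ⟨⟨hD2, by rw [hD2]; positivity⟩, ?_⟩
  rw [hDt, hD1, hD2]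
  -- log identity
  have hπ : 0 < Real.pi := Real.pi_pos
  have hlog : Real.log (2 * Real.pi * ξ / (σ ^ 2 * (2 * E2)))
      = -Real.log (σ ^ 2 / (Real.pi * ξ)) + c * (T - t) := by
    have h1 : 2 * Real.pi * ξ / (σ ^ 2 * (2 * E2))
        = (Real.pi * ξ / σ ^ 2) * Real.exp (c * (T - t)) := by
      rw [show Real.exp (c * (T - t)) = E2⁻¹ by
        rw [hE2, ← Real.exp_neg]; ring_nf]
      field_simp
    rw [h1, Real.log_mul (by positivity) (Real.exp_ne_zero _), Real.log_exp,
      show Real.pi * ξ / σ ^ 2 = (σ ^ 2 / (Real.pi * ξ))⁻¹ by field_simp,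
      Real.log_inv]
  rw [hlog, hK]
  have hE2ne : E2 ≠ 0 := ne_of_gt hE2pos
  rw [hc]
  field_simp
  ring
end

section
/- Let V(t,x,i) = P(t,i)[x + (λ−z)H(t,i)]² + (λ−z)²C(t,i) + D(t,i) − λ², where for each regime i ∈ {1,…,l}, P(·,i), H(·,i), C(·,i), D(·,i) : [0,T] → ℝ are differentiable functions satisfying: P'(t,i) = (ρ_i² − 2r_i)P(t,i) − Σ_j q_ij P(t,j); H'(t,i) = r_i H(t,i) − (1/P(t,i))Σ_j q_ij P(t,j)(H(t,j) − H(t,i)); C'(t,i) = −Σ_j q_ij[P(t,j)(H(t,j) − H(t,i))² + C(t,j)]; D'(t,i) = (ξ/2)log(πξ/(σ_i² P(t,i))) − Σ_j q_ij D(t,j), with P(t,i) > 0 and Σ_j q_ij = 0 for each i. Then V satisfies, for all t, x, i: V_t(t,x,i) + V_x(t,x,i)·r_i·x + Σ_j q_ij V(t,x,j) − (1/2)ρ_i² V_x(t,x,i)²/V_xx(t,x,i) − (ξ/2)log(2πξ/(σ_i² V_xx(t,x,i))) = 0. -/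
open Set

/-- Regime-switching verification (core of Theorem 3.1): the ansatz
`V(t,x,i) = P(t,i)[x+(λ-z)H(t,i)]² + (λ-z)²C(t,i) + D(t,i) - λ²`, built from solutions
of the coupled ODE system for `P, H, C, D`, satisfies the reduced HJB equation
`V_t + V_x·r_i·x + ∑_j q_ij V(t,x,j) - (1/2)ρ_i²V_x²/V_xx - (ξ/2)log(2πξ/(σ_i²V_xx)) = 0`. -/
theorem stmt_10 (l : ℕ) (Q : Matrix (Fin l) (Fin l) ℝ)
    (h_rowsum : ∀ i, ∑ j, Q i j = 0)
    (σ ρ r : Fin l → ℝ) (hσ : ∀ i, 0 < σ i)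
    (ξ lam z : ℝ) (hξ : 0 < ξ)
    (P H C D : ℝ → Fin l → ℝ)
    (hP_pos : ∀ t i, 0 < P t i)
    (hP : ∀ t i, HasDerivAt (fun s => P s i)
      ((ρ i ^ 2 - 2 * r i) * P t i - ∑ j, Q i j * P t j) t)
    (hH : ∀ t i, HasDerivAt (fun s => H s i)
      (r i * H t i - (1 / P t i) * ∑ j, Q i j * P t j * (H t j - H t i)) t)
    (hC : ∀ t i, HasDerivAt (fun s => C s i)
      (-∑ j, Q i j * (P t j * (H t j - H t i) ^ 2 + C t j)) t)
    (hD : ∀ t i, HasDerivAt (fun s => D s i)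
      ((ξ / 2) * Real.log (Real.pi * ξ / (σ i ^ 2 * P t i)) - ∑ j, Q i j * D t j) t)
    (V : ℝ → ℝ → Fin l → ℝ)
    (hV : ∀ t x i, V t x i
      = P t i * (x + (lam - z) * H t i) ^ 2 + (lam - z) ^ 2 * C t i + D t i - lam ^ 2) :
    ∀ t x i,
      deriv (fun s => V s x i) t
        + deriv (fun y => V t y i) x * r i * x
        + ∑ j, Q i j * V t x j
        - (1 / 2) * ρ i ^ 2 * (deriv (fun y => V t y i) x) ^ 2
            / deriv (fun y' => deriv (fun y => V t y i) y') x
        - (ξ / 2) * Real.log (2 * Real.pi * ξ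
            / (σ i ^ 2 * deriv (fun y' => deriv (fun y => V t y i) y') x)) = 0 := by
  intro t x i
  set a := lam - z with ha
  have hPne : P t i ≠ 0 := (hP_pos t i).ne'
  -- x-derivative
  have hx : ∀ y : ℝ, HasDerivAt (fun y => V t y i) (2 * P t i * (y + a * H t i)) y := by
    intro y
    have hfun : (fun y => V t y i) = fun y =>
        P t i * (y + a * H t i) ^ 2 + (a ^ 2 * C t i + D t i - lam ^ 2) := by
      funext y; rw [hV]; ring
    rw [hfun]
    have h1 := ((((hasDerivAt_id y).add_const (a * H t i)).pow 2).const_mul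
      (P t i)).add_const (a ^ 2 * C t i + D t i - lam ^ 2)
    convert h1 using 1
    · rfl
    · rfl
    · funext y; simp [id]
    simp [id]
    ring
  have hVx : deriv (fun y => V t y i) x = 2 * P t i * (x + a * H t i) := (hx x).deriv
  have hVxxfun : (fun y' => deriv (fun y => V t y i) y') = fun y' => 2 * P t i * (y' + a * H t i) :=
    funext fun y => (hx y).deriv
  have hVxx : deriv (fun y' => deriv (fun y => V t y i) y') x = 2 * P t i := by
    rw [hVxxfun]
    have h2 : HasDerivAt (fun y' : ℝ => 2 * P t i * (y' + a * H t i)) (2 * P t i * 1) x :=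
      ((hasDerivAt_id x).add_const _).const_mul _
    simpa using h2.deriv
  -- t-derivative
  have htfun : (fun s => V s x i) = fun s =>
      P s i * (x + a * H s i) ^ 2 + a ^ 2 * C s i + D s i - lam ^ 2 := by
    funext s; rw [hV]
  have hHd := hH t i
  have hPd := hP t i
  have hCd := hC t i
  have hDd := hD t i
  have ht : HasDerivAt (fun s => V s x i)
      (((ρ i ^ 2 - 2 * r i) * P t i - ∑ j, Q i j * P t j) * (x + a * H t i) ^ 2
        + P t i * (2 * (x + a * H t i) ^ 1 * (0 + a * (r i * H t i - (1 / P t i) * ∑ j, Q i j * P t j * (H t j - H t i))))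
        + a ^ 2 * (-∑ j, Q i j * (P t j * (H t j - H t i) ^ 2 + C t j))
        + ((ξ / 2) * Real.log (Real.pi * ξ / (σ i ^ 2 * P t i)) - ∑ j, Q i j * D t j)) t := by
    rw [htfun]
    exact (((hPd.mul (((hasDerivAt_const t x).add (hHd.const_mul a)).pow 2)).add
      (hCd.const_mul _)).add hDd).sub_const _
  have hVt := ht.deriv
  rw [hVt, hVx, hVxx]
  -- log simplification
  have hσne : σ i ≠ 0 := (hσ i).ne'
  have hlog : 2 * Real.pi * ξ / (σ i ^ 2 * (2 * P t i)) = Real.pi * ξ / (σ i ^ 2 * P t i) := by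
    field_simp
  rw [hlog]
  -- sum identities
  have e1 : ∑ j, Q i j * P t j * (H t j - H t i)
      = (∑ j, Q i j * P t j * H t j) - H t i * ∑ j, Q i j * P t j := by
    rw [Finset.mul_sum, ← Finset.sum_sub_distrib]
    exact Finset.sum_congr rfl fun j _ => by ring
  have e2 : ∑ j, Q i j * (P t j * (H t j - H t i) ^ 2 + C t j)
      = (∑ j, Q i j * P t j * H t j ^ 2) - 2 * H t i * (∑ j, Q i j * P t j * H t j)
        + H t i ^ 2 * (∑ j, Q i j * P t j) + ∑ j, Q i j * C t j := by
    rw [Finset.mul_sum, Finset.mul_sum, ← Finset.sum_sub_distrib, ← Finset.sum_add_distrib,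
      ← Finset.sum_add_distrib]
    exact Finset.sum_congr rfl fun j _ => by ring
  have e3 : ∑ j, Q i j * V t x j
      = x ^ 2 * (∑ j, Q i j * P t j) + 2 * a * x * (∑ j, Q i j * P t j * H t j)
        + a ^ 2 * (∑ j, Q i j * P t j * H t j ^ 2) + a ^ 2 * (∑ j, Q i j * C t j)
        + (∑ j, Q i j * D t j) - lam ^ 2 * ∑ j, Q i j := by
    rw [Finset.mul_sum, Finset.mul_sum, Finset.mul_sum, Finset.mul_sum, Finset.mul_sum,
      ← Finset.sum_add_distrib, ← Finset.sum_add_distrib, ← Finset.sum_add_distrib,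
      ← Finset.sum_add_distrib, ← Finset.sum_sub_distrib]
    exact Finset.sum_congr rfl fun j _ => by rw [hV]; ring
  rw [e1, e2, e3, h_rowsum]
  field_simp
  ring
end

section
/- Suppose for each i the ODEs P'(t,i) = (ρ_i²−2r_i)P(t,i) − Σ_j q_ij P(t,j) with P(T,i)=1 hold, where Q=(q_ij) is a generator matrix and ρ_i, r_i are constants. Then P(t,i) > 0 for all t ∈ [0,T] and all i. -/
open Set Filter Topology

/-- Positivity of the solution of the coupled linear ODE system
`P'(t,i) = (ρ_i²-2r_i)P(t,i) - ∑_j q_ij P(t,j)`, `P(T,i) = 1`, where `Q` is a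
generator matrix: `P(t,i) > 0` for all `t ∈ [0,T]` and all regimes `i`. -/
theorem stmt_12 (l : ℕ) (Q : Matrix (Fin l) (Fin l) ℝ)
    (h_offdiag : ∀ i j, i ≠ j → 0 ≤ Q i j)
    (h_rowsum : ∀ i, ∑ j, Q i j = 0)
    (ρ r : Fin l → ℝ) (T : ℝ) (hT : 0 < T)
    (P : ℝ → Fin l → ℝ)
    (hP : ∀ i, ∀ t ∈ Icc (0 : ℝ) T, HasDerivAt (fun s => P s i)
      ((ρ i ^ 2 - 2 * r i) * P t i - ∑ j, Q i j * P t j) t)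
    (hPT : ∀ i, P T i = 1) :
    ∀ t ∈ Icc (0 : ℝ) T, ∀ i, 0 < P t i := by
  intro t ht i
  by_contra hneg
  push_neg at hneg
  -- the set of bad times
  set B : Set ℝ := ⋃ j, {s | s ∈ Icc (0:ℝ) T ∧ P s j ≤ 0} with hBdef
  have hBne : B.Nonempty := ⟨t, mem_iUnion.2 ⟨i, ht, hneg⟩⟩
  have hBsub : B ⊆ Icc 0 T := by
    intro s hs; rcases mem_iUnion.1 hs with ⟨j, hj1, _⟩; exact hj1
  have hBclosed : IsClosed B := by
    apply isClosed_iUnion_of_finite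
    intro j
    have hc : ContinuousOn (fun s => P s j) (Icc 0 T) := fun s hs =>
      ((hP j s hs).continuousAt).continuousWithinAt
    have : {s | s ∈ Icc (0:ℝ) T ∧ P s j ≤ 0}
        = Icc 0 T ∩ (fun s => P s j) ⁻¹' Iic 0 := rfl
    rw [this]
    exact hc.preimage_isClosed_of_isClosed isClosed_Icc isClosed_Iic
  have hBcomp : IsCompact B := isCompact_Icc.of_isClosed_subset hBclosed hBsub
  obtain ⟨t0, ht0B, ht0ub⟩ := hBcomp.exists_isGreatest hBne
  have ht0Icc : t0 ∈ Icc (0:ℝ) T := hBsub ht0B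
  obtain ⟨i0, _, hi0⟩ := mem_iUnion.1 ht0B
  have ht0T : t0 < T := by
    rcases lt_or_eq_of_le ht0Icc.2 with h | h
    · exact h
    · exfalso; rw [h, hPT i0] at hi0; linarith
  -- positivity strictly after t0
  have hpos : ∀ s ∈ Ioc t0 T, ∀ j, 0 < P s j := by
    intro s hs j
    by_contra hc
    push_neg at hc
    have : s ∈ B := mem_iUnion.2 ⟨j, ⟨le_trans ht0Icc.1 hs.1.le, hs.2⟩, hc⟩
    exact absurd (ht0ub this) (not_le.2 hs.1)
  -- nonnegativity at t0 via right limits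
  have hnonneg0 : ∀ j, 0 ≤ P t0 j := by
    intro j
    haveI : (𝓝[Ioc t0 T] t0).NeBot := by
      apply mem_closure_iff_nhdsWithin_neBot.1
      rw [closure_Ioc ht0T.ne]
      exact ⟨le_refl t0, ht0T.le⟩
    have htend : Filter.Tendsto (fun u => P u j) (𝓝[Ioc t0 T] t0) (𝓝 (P t0 j)) :=
      ((hP j t0 ht0Icc).continuousAt).continuousWithinAt
    refine ge_of_tendsto htend ?_
    filter_upwards [self_mem_nhdsWithin] with u hu
    exact (hpos u hu j).le
  -- nonnegativity on [t0, T]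
  have hnonneg : ∀ s ∈ Icc t0 T, ∀ j, 0 ≤ P s j := by
    intro s hs j
    rcases eq_or_lt_of_le hs.1 with h | h
    · rw [← h]; exact hnonneg0 j
    · exact (hpos s ⟨h, hs.2⟩ j).le
  -- Gronwall-type argument with g(s) = P s i0 * exp(-c s)
  set c : ℝ := ρ i0 ^ 2 - 2 * r i0 - Q i0 i0 with hcdef
  set g : ℝ → ℝ := fun s => P s i0 * Real.exp (-c * s) with hgdef
  have hIccsub : Icc t0 T ⊆ Icc 0 T := Icc_subset_Icc ht0Icc.1 le_rfl
  have hgderiv : ∀ s ∈ Icc t0 T, HasDerivAt g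
      (((ρ i0 ^ 2 - 2 * r i0) * P s i0 - ∑ j, Q i0 j * P s j) * Real.exp (-c * s)
        + P s i0 * (Real.exp (-c * s) * (-c))) s := by
    intro s hs
    have he : HasDerivAt (fun x : ℝ => Real.exp (-c * x)) (Real.exp (-c * s) * (-c)) s := by
      have h1 : HasDerivAt (fun x : ℝ => -c * x) (-c) s := by
        simpa using (hasDerivAt_id s).const_mul (-c)
      exact h1.exp
    exact (hP i0 s (hIccsub hs)).mul he
  have hgcont : ContinuousOn g (Icc t0 T) := fun s hs =>
    ((hgderiv s hs).continuousAt).continuousWithinAt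
  have hgdiff : DifferentiableOn ℝ g (interior (Icc t0 T)) := by
    intro s hs
    rw [interior_Icc] at hs
    exact ((hgderiv s (Ioo_subset_Icc_self hs)).differentiableAt).differentiableWithinAt
  have hganti : AntitoneOn g (Icc t0 T) := by
    apply antitoneOn_of_deriv_nonpos (convex_Icc t0 T) hgcont hgdiff
    intro s hs
    rw [interior_Icc] at hs
    have hsI : s ∈ Icc t0 T := Ioo_subset_Icc_self hs
    rw [(hgderiv s hsI).deriv]
    have hsum : ∑ j, Q i0 j * P s j
        = Q i0 i0 * P s i0 + ∑ j ∈ Finset.univ.erase i0, Q i0 j * P s j :=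
      (Finset.add_sum_erase Finset.univ (fun j => Q i0 j * P s j)
        (Finset.mem_univ i0)).symm
    have hterm : 0 ≤ ∑ j ∈ Finset.univ.erase i0, Q i0 j * P s j := by
      apply Finset.sum_nonneg
      intro j hj
      exact mul_nonneg (h_offdiag i0 j (Ne.symm (Finset.ne_of_mem_erase hj)))
        (hnonneg s hsI j)
    have hexp : 0 < Real.exp (-c * s) := Real.exp_pos _
    have heq : ((ρ i0 ^ 2 - 2 * r i0) * P s i0 - ∑ j, Q i0 j * P s j) * Real.exp (-c * s)
        + P s i0 * (Real.exp (-c * s) * (-c))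
        = (-(∑ j ∈ Finset.univ.erase i0, Q i0 j * P s j)) * Real.exp (-c * s) := by
      rw [hsum, hcdef]; ring
    rw [heq]
    exact mul_nonpos_of_nonpos_of_nonneg (neg_nonpos.2 hterm) hexp.le
  have hle : g T ≤ g t0 :=
    hganti (left_mem_Icc.2 ht0T.le) (right_mem_Icc.2 ht0T.le) ht0T.le
  have hgT : g T = Real.exp (-c * T) := by simp [hgdef, hPT i0]
  have hgt0 : g t0 ≤ 0 :=
    mul_nonpos_of_nonpos_of_nonneg hi0 (Real.exp_pos _).le
  have := Real.exp_pos (-c * T)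
  rw [hgT] at hle
  linarith
end

section
/- Let p_im(t) = (e^{tQ})_{im} for a generator matrix Q on {1,…,l}, let P(·,j), H(·,j) be continuous on [0,T], and define C(t,i) = Σ_{m=1}^l Σ_{j=1}^l ∫_t^T p_{im}(s−t)·q_{mj}·P(s,j)·(H(s,j) − H(s,m))² ds. Then C(T,i) = 0 for all i, and C satisfies ∂_t C(t,i) = −Σ_{j=1}^l q_ij[P(t,j)(H(t,j) − H(t,i))² + C(t,j)]. -/
open Set Matrix

open NormedSpace in
private lemma matExpEntryDeriv {l : ℕ} (Q : Matrix (Fin l) (Fin l) ℝ) (i m : Fin l) (t : ℝ) :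
    HasDerivAt (fun u : ℝ => exp (u • Q) i m) ((exp (t • Q) * Q) i m) t := by
  letI : NormedRing (Matrix (Fin l) (Fin l) ℝ) := Matrix.linftyOpNormedRing
  letI : NormedAlgebra ℝ (Matrix (Fin l) (Fin l) ℝ) := Matrix.linftyOpNormedAlgebra
  have h := hasDerivAt_exp_smul_const (𝕂 := ℝ) Q t
  have hφ : Continuous fun A : Matrix (Fin l) (Fin l) ℝ => A i m :=
    LinearMap.continuous_of_finiteDimensional (Matrix.entryLinearMap ℝ ℝ i m)
  let φ : Matrix (Fin l) (Fin l) ℝ →L[ℝ] ℝ := ⟨Matrix.entryLinearMap ℝ ℝ i m, hφ⟩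
  exact (φ.hasFDerivAt.comp_hasDerivAt t h : )

private lemma matExpEntryCont {l : ℕ} (Q : Matrix (Fin l) (Fin l) ℝ) (i m : Fin l) :
    Continuous fun u : ℝ => NormedSpace.exp (u • Q) i m :=
  continuous_iff_continuousAt.2 fun t => (matExpEntryDeriv Q i m t).continuousAt

open NormedSpace in
private lemma matExpComm {l : ℕ} (Q : Matrix (Fin l) (Fin l) ℝ) (t : ℝ) :
    Q * exp (t • Q) = exp (t • Q) * Q := by
  letI : NormedRing (Matrix (Fin l) (Fin l) ℝ) := Matrix.linftyOpNormedRing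
  letI : NormedAlgebra ℝ (Matrix (Fin l) (Fin l) ℝ) := Matrix.linftyOpNormedAlgebra
  exact (((Commute.refl Q).smul_right t).exp_right).eq

/-- Integral representation of the coefficient `C(t,i)` of the regime-switching
value function: with `p_im(t) = (e^{tQ})_im`,
`C(t,i) = ∑_m ∑_j ∫_t^T p_im(s-t) q_mj P(s,j) (H(s,j) - H(s,m))² ds`
satisfies `C(T,i) = 0` and `∂_t C(t,i) = -∑_j q_ij [P(t,j)(H(t,j)-H(t,i))² + C(t,j)]`. -/
theorem stmt_17 (l : ℕ) (Q : Matrix (Fin l) (Fin l) ℝ)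
    (h_offdiag : ∀ i j, i ≠ j → 0 ≤ Q i j)
    (h_rowsum : ∀ i, ∑ j, Q i j = 0)
    (T : ℝ) (hT : 0 < T)
    (P H : ℝ → Fin l → ℝ)
    (hP_cont : ∀ j, Continuous fun t => P t j)
    (hH_cont : ∀ j, Continuous fun t => H t j)
    (C : ℝ → Fin l → ℝ)
    (hC : ∀ t i, C t i = ∑ m, ∑ j, ∫ s in t..T,
        NormedSpace.exp ((s - t) • Q) i m * Q m j * P s j * (H s j - H s m) ^ 2) :
    (∀ i, C T i = 0)
    ∧ ∀ i, ∀ t ∈ Icc (0 : ℝ) T,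
        HasDerivAt (fun t => C t i)
          (-∑ j, Q i j * (P t j * (H t j - H t i) ^ 2 + C t j)) t := by
  set E : ℝ → Matrix (Fin l) (Fin l) ℝ := fun u => NormedSpace.exp (u • Q) with hE
  set f : ℝ → Fin l → ℝ := fun s m => ∑ j, Q m j * P s j * (H s j - H s m) ^ 2 with hf
  have hf_cont : ∀ m, Continuous fun s => f s m := fun m =>
    continuous_finset_sum _ fun j _ =>
      ((continuous_const.mul (hP_cont j)).mul (((hH_cont j).sub (hH_cont m)).pow 2))
  set g : ℝ → Fin l → ℝ := fun s k => ∑ m, E s k m * f s m with hg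
  have hg_cont : ∀ k, Continuous fun s => g s k := fun k =>
    continuous_finset_sum _ fun m _ => (matExpEntryCont Q k m).mul (hf_cont m)
  have hEsplit : ∀ t s : ℝ, E (s - t) = E (-t) * E s := by
    intro t s
    have h1 : (s - t) • Q = (-t) • Q + s • Q := by rw [← add_smul]; ring_nf
    rw [hE]; simp only
    rw [h1, Matrix.exp_add_of_commute]
    exact ((Commute.refl Q).smul_left (-t)).smul_right s
  have hEst_cont : ∀ (t : ℝ) (i m : Fin l), Continuous fun s => E (s - t) i m := by
    intro t i m
    exact (matExpEntryCont Q i m).comp (continuous_id.sub continuous_const)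
  have key : ∀ t i, C t i = ∑ k, E (-t) i k * ∫ s in t..T, g s k := by
    intro t i
    rw [hC]
    have h1 : ∀ m : Fin l, (∑ j, ∫ s in t..T,
        E (s - t) i m * Q m j * P s j * (H s j - H s m) ^ 2)
        = ∫ s in t..T, E (s - t) i m * f s m := by
      intro m
      rw [← intervalIntegral.integral_finset_sum]
      · congr 1; ext s; rw [hf]; simp only [Finset.mul_sum]
        exact Finset.sum_congr rfl fun j _ => by ring
      · intro j _
        exact ((((hEst_cont t i m).mul continuous_const).mul (hP_cont j)).mul
          (((hH_cont j).sub (hH_cont m)).pow 2)).intervalIntegrable _ _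
    refine (Finset.sum_congr rfl fun m _ => h1 m).trans ?_
    have h2 : ∀ s : ℝ, (∑ m, E (s - t) i m * f s m) = ∑ k, E (-t) i k * g s k := by
      intro s
      rw [hg]; simp only
      calc (∑ m, E (s - t) i m * f s m)
          = ∑ m, (∑ k, E (-t) i k * E s k m) * f s m := by
            refine Finset.sum_congr rfl fun m _ => ?_
            rw [hEsplit t s, Matrix.mul_apply]
        _ = ∑ k, E (-t) i k * ∑ m, E s k m * f s m := by
            simp_rw [Finset.sum_mul, Finset.mul_sum, mul_assoc]
            exact Finset.sum_comm
    rw [← intervalIntegral.integral_finset_sum (f := fun m s => E (s - t) i m * f s m)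
      (fun m _ => ((hEst_cont t i m).mul (hf_cont m)).intervalIntegrable _ _)]
    simp_rw [h2]
    rw [intervalIntegral.integral_finset_sum (f := fun k s => E (-t) i k * g s k)
      (fun k _ => (continuous_const.mul (hg_cont k)).intervalIntegrable _ _)]
    exact Finset.sum_congr rfl fun k _ => intervalIntegral.integral_const_mul _ _
  constructor
  · intro i
    simp [hC, intervalIntegral.integral_same]
  · intro i t ht
    have hW : ∀ k, HasDerivAt (fun u => ∫ s in u..T, g s k) (-(g t k)) t := fun k =>
      intervalIntegral.integral_hasDerivAt_left ((hg_cont k).intervalIntegrable _ _)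
        ((hg_cont k).stronglyMeasurableAtFilter _ _) (hg_cont k).continuousAt
    have hEk : ∀ k, HasDerivAt (fun u => E (-u) i k) (-((Q * E (-t)) i k)) t := by
      intro k
      have h := (matExpEntryDeriv Q i k (-t)).scomp t (hasDerivAt_neg t)
      have he : (-1 : ℝ) • ((NormedSpace.exp ((-t) • Q) * Q) i k) = -((Q * E (-t)) i k) := by
        rw [hE]; simp only; rw [← matExpComm]; simp
      rw [he] at h
      exact h
    have hsum := HasDerivAt.sum (u := Finset.univ)
      (A := fun k (u : ℝ) => E (-u) i k * ∫ s in u..T, g s k)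
      (fun k _ => (hEk k).mul (hW k))
    have hfun : (fun u => C u i) = fun u => ∑ k, E (-u) i k * ∫ s in u..T, g s k :=
      funext fun u => key u i
    rw [hfun]
    rw [Finset.sum_fn] at hsum
    refine hsum.congr_deriv (Eq.symm ?_)
    have hone : E (-t) * E t = 1 := by
      rw [← hEsplit t t, hE]; simp only [sub_self, zero_smul, NormedSpace.exp_zero]
    have hB : (∑ k, E (-t) i k * g t k) = f t i := by
      rw [hg]; simp only
      calc (∑ k, E (-t) i k * ∑ m, E t k m * f t m)
          = ∑ m, (∑ k, E (-t) i k * E t k m) * f t m := by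
            simp_rw [Finset.mul_sum, Finset.sum_mul, mul_assoc]
            exact Finset.sum_comm
        _ = f t i := by
            have : ∀ m, (∑ k, E (-t) i k * E t k m) = (1 : Matrix (Fin l) (Fin l) ℝ) i m := by
              intro m; rw [← hone, Matrix.mul_apply]
            simp_rw [this, Matrix.one_apply]
            simp
    have hA : (∑ k, (Q * E (-t)) i k * ∫ s in t..T, g s k) = ∑ j, Q i j * C t j := by
      calc (∑ k, (Q * E (-t)) i k * ∫ s in t..T, g s k)
          = ∑ k, (∑ j, Q i j * E (-t) j k) * ∫ s in t..T, g s k := by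
            simp_rw [Matrix.mul_apply]
        _ = ∑ j, Q i j * ∑ k, E (-t) j k * ∫ s in t..T, g s k := by
            simp_rw [Finset.sum_mul, Finset.mul_sum, mul_assoc]
            exact Finset.sum_comm
        _ = ∑ j, Q i j * C t j := by
            refine Finset.sum_congr rfl fun j _ => ?_
            rw [key t j]
    calc -∑ j, Q i j * (P t j * (H t j - H t i) ^ 2 + C t j)
        = -((∑ j, Q i j * P t j * (H t j - H t i) ^ 2) + ∑ j, Q i j * C t j) := by
          rw [← Finset.sum_add_distrib]
          congr 1
          exact Finset.sum_congr rfl fun j _ => by ring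
      _ = -(f t i) + -(∑ j, Q i j * C t j) := by rw [hf]; simp only; ring
      _ = ∑ k, (-((Q * E (-t)) i k) * (∫ s in t..T, g s k) + E (-t) i k * -(g t k)) := by
          rw [Finset.sum_add_distrib]
          simp only [neg_mul, mul_neg, Finset.sum_neg_distrib]
          rw [hA, hB]
          ring
end
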